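/- Let G be a finite connected simple graph with n ≥ 1 vertices and let k ≥ 1. Let G' be the simple graph obtained from G by adding new vertices x, x', x_1, …, x_{n²}, adding an edge from x to every other vertex of G' except x', and adding an edge from x' to every other vertex of G' except x. Then the number of cocircuits of G' of size n² + n + k equals 2^{n²+1} times the number of cuts of G of size k. -/

import Mathlib

open SimpleGraph

/-- The crossing set `δ(X,Y)` of a pair of vertex sets: the edges of `G` with one
endpoint in `X` and the other in `Y`. -/
def crossSet {V : Type*} (G : SimpleGraph V) (X Y : Set V) : Set (Sym2 V) :=
  {e | e ∈ G.edgeSet ∧ ∃ a ∈ X, ∃ b ∈ Y, e = s(a, b)}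

/-- `(X, Y)` is a cut: a partition of the vertex set into two nonempty shores. -/
def IsCutPair {V : Type*} (X Y : Set V) : Prop :=
  X.Nonempty ∧ Y.Nonempty ∧ X ∩ Y = ∅ ∧ X ∪ Y = Set.univ

/-- `(X, Y)` is a cocircuit: a cut such that no proper subset of its crossing set is
the crossing set of a cut. -/
def IsCocircuitPair {V : Type*} (G : SimpleGraph V) (X Y : Set V) : Prop :=
  IsCutPair X Y ∧ ∀ X' Y' : Set V, IsCutPair X' Y' → ¬ crossSet G X' Y' ⊂ crossSet G X Y

/-- The number of cocircuits of `G`; a cocircuit is an unordered pair of shores,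
represented as an element of `Sym2 (Set V)`. -/
noncomputable def numCocircuits {V : Type*} (G : SimpleGraph V) : ℕ :=
  Nat.card {p : Sym2 (Set V) // ∃ X Y : Set V, p = s(X, Y) ∧ IsCocircuitPair G X Y}

/-- The number of cocircuits of `G` of size `k`. -/
noncomputable def numCocircuitsOfSize {V : Type*} (G : SimpleGraph V) (k : ℕ) : ℕ :=
  Nat.card {p : Sym2 (Set V) // ∃ X Y : Set V,
    p = s(X, Y) ∧ IsCocircuitPair G X Y ∧ (crossSet G X Y).ncard = k}

/-- A convex two-colouring of `G`: both colour classes induce connected subgraphs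
(the empty induced subgraph counts as connected). -/
def ConvexTwoColouring {V : Type*} (G : SimpleGraph V) (f : V → Fin 2) : Prop :=
  (G.induce (f ⁻¹' {0})).Preconnected ∧ (G.induce (f ⁻¹' {1})).Preconnected

/-- Vertex set of the extended graph `G'`: the vertices of `G` together with the new
vertices `x, x'` and `x₁, …, x_{n²}`. -/
abbrev ExtV (V : Type*) (n : ℕ) : Type _ := V ⊕ (Fin 2 ⊕ Fin (n ^ 2))

/-- The new vertex `x`. -/
def extX {V : Type*} {n : ℕ} : ExtV V n := Sum.inr (Sum.inl 0)

/-- The new vertex `x'`. -/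
def extX' {V : Type*} {n : ℕ} : ExtV V n := Sum.inr (Sum.inl 1)

/-- The new vertex `x_j` for `j ∈ {1, …, n²}`. -/
def extAux {V : Type*} {n : ℕ} (j : Fin (n ^ 2)) : ExtV V n := Sum.inr (Sum.inr j)

/-- The extended graph `G'`: it keeps all edges of `G`, and in addition `x` is joined
to every other vertex except `x'`, and `x'` is joined to every other vertex except
`x`. -/
def extGraph {V : Type*} (G : SimpleGraph V) (n : ℕ) : SimpleGraph (ExtV V n) :=
  SimpleGraph.fromEdgeSet
    ((Sym2.map Sum.inl '' G.edgeSet) ∪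
      {d : Sym2 (ExtV V n) | ∃ w : ExtV V n, w ≠ extX ∧ w ≠ extX' ∧
        (d = s(extX, w) ∨ d = s(extX', w))})


open Set

section Basic
variable {V : Type*} {G : SimpleGraph V} {X Y : Set V}

lemma crossSet_comm (G : SimpleGraph V) (X Y : Set V) : crossSet G X Y = crossSet G Y X := by
  ext e
  constructor <;> rintro ⟨he, a, ha, b, hb, rfl⟩ <;>
    exact ⟨by simpa [Sym2.eq_swap] using he, b, hb, a, ha, Sym2.eq_swap⟩

lemma IsCutPair.symm {X Y : Set V} (h : IsCutPair X Y) : IsCutPair Y X :=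
  ⟨h.2.1, h.1, by rw [Set.inter_comm]; exact h.2.2.1, by rw [Set.union_comm]; exact h.2.2.2⟩

lemma IsCocircuitPair.symm (h : IsCocircuitPair G X Y) : IsCocircuitPair G Y X :=
  ⟨h.1.symm, fun X' Y' hc => by rw [crossSet_comm G Y X]; exact h.2 X' Y' hc⟩

lemma mem_Y_of_not_mem_X (h : X ∪ Y = Set.univ) {v : V} (hv : v ∉ X) : v ∈ Y := by
  have : v ∈ X ∪ Y := h ▸ Set.mem_univ v
  rcases this with h' | h'
  · exact absurd h' hv
  · exact h'

lemma adj_mem_crossSet {a b : V} (hab : G.Adj a b) (ha : a ∈ X) (hb : b ∈ Y) :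
    s(a, b) ∈ crossSet G X Y := ⟨hab, a, ha, b, hb, rfl⟩

lemma crossSet_cases {e : Sym2 V} (he : e ∈ crossSet G X Y) :
    ∃ a b, G.Adj a b ∧ a ∈ X ∧ b ∈ Y ∧ e = s(a, b) := by
  obtain ⟨he, a, ha, b, hb, rfl⟩ := he
  exact ⟨a, b, he, ha, hb, rfl⟩

/-- Any walk from `X` to `Y` across a partition contains a crossing edge. -/
lemma exists_cross_of_walk (hd : X ∩ Y = ∅) (hu : X ∪ Y = Set.univ) {a b : V}
    (w : G.Walk a b) (ha : a ∈ X) (hb : b ∈ Y) :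
    ∃ p q, G.Adj p q ∧ p ∈ X ∧ q ∈ Y := by
  induction w with
  | nil => exact absurd (Set.mem_inter ha hb) (by simp [hd])
  | @cons u v z h p ih =>
    by_cases hv : v ∈ Y
    · exact ⟨u, v, h, ha, hv⟩
    · exact ih (by rcases (hu ▸ Set.mem_univ v : v ∈ X ∪ Y) with h' | h' <;> tauto) hb

lemma exists_cross_of_walk_induce {Z X' Y' : Set V} (hd : X' ∩ Y' = ∅)
    (hu : X' ∪ Y' = Set.univ) {a z : Z} (w : (G.induce Z).Walk a z)
    (ha : (a : V) ∈ X') (hz : (z : V) ∈ Y') :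
    ∃ p q, G.Adj p q ∧ p ∈ Z ∧ q ∈ Z ∧ p ∈ X' ∧ q ∈ Y' := by
  induction w with
  | nil => exact absurd (Set.mem_inter ha hz) (by simp [hd])
  | @cons u v z h p ih =>
    by_cases hv : (v : V) ∈ Y'
    · exact ⟨u, v, h, u.2, v.2, ha, hv⟩
    · exact ih (by rcases (hu ▸ Set.mem_univ (v : V) : (v : V) ∈ X' ∪ Y') with h' | h' <;> tauto) hz

end Basic
section Shores
variable {V : Type*} {G : SimpleGraph V} {X Y : Set V}

lemma not_mem_inter_of_empty (hd : X ∩ Y = ∅) {v : V} (h1 : v ∈ X) (h2 : v ∈ Y) : False := by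
  have := Set.eq_empty_iff_forall_notMem.1 hd v
  exact this ⟨h1, h2⟩

lemma cross_pair_cases {p q : V} (h : s(p, q) ∈ crossSet G X Y) :
    (p ∈ X ∧ q ∈ Y) ∨ (q ∈ X ∧ p ∈ Y) := by
  obtain ⟨a, b, _, ha, hb, heq⟩ := crossSet_cases h
  rcases Sym2.eq_iff.1 heq with ⟨rfl, rfl⟩ | ⟨rfl, rfl⟩
  · exact Or.inl ⟨ha, hb⟩
  · exact Or.inr ⟨ha, hb⟩

private lemma inner_no_ssubset {X' Y' : Set V} (hd : X ∩ Y = ∅) (hu : X ∪ Y = Set.univ)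
    (hX : (G.induce X).Preconnected) (hY : (G.induce Y).Preconnected)
    (hcut' : IsCutPair X' Y') (hsub : crossSet G X' Y' ⊆ crossSet G X Y)
    {a b : V} (hadj : G.Adj a b) (haX : a ∈ X) (hbY : b ∈ Y)
    (haX' : a ∈ X') (hbX' : b ∈ X') : False := by
  obtain ⟨-, ⟨z, hzY'⟩, hd', hu'⟩ := hcut'
  by_cases hzX : z ∈ X
  · obtain ⟨w⟩ := hX ⟨a, haX⟩ ⟨z, hzX⟩
    obtain ⟨p, q, hpq, hpZ, hqZ, hpX', hqY'⟩ := exists_cross_of_walk_induce hd' hu' w haX' hzY'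
    rcases cross_pair_cases (hsub (adj_mem_crossSet hpq hpX' hqY')) with ⟨-, h2⟩ | ⟨-, h2⟩
    · exact not_mem_inter_of_empty hd hqZ h2
    · exact not_mem_inter_of_empty hd hpZ h2
  · have hzYY : z ∈ Y := mem_Y_of_not_mem_X hu hzX
    obtain ⟨w⟩ := hY ⟨b, hbY⟩ ⟨z, hzYY⟩
    obtain ⟨p, q, hpq, hpZ, hqZ, hpX', hqY'⟩ := exists_cross_of_walk_induce hd' hu' w hbX' hzY'
    rcases cross_pair_cases (hsub (adj_mem_crossSet hpq hpX' hqY')) with ⟨h1, -⟩ | ⟨h1, -⟩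
    · exact not_mem_inter_of_empty hd h1 hpZ
    · exact not_mem_inter_of_empty hd h1 hqZ

/-- A cut with both shores connected is a cocircuit. -/
lemma cocircuit_of_connected_shores (hcut : IsCutPair X Y)
    (hX : (G.induce X).Preconnected) (hY : (G.induce Y).Preconnected) :
    IsCocircuitPair G X Y := by
  obtain ⟨hXne, hYne, hd, hu⟩ := hcut
  refine ⟨⟨hXne, hYne, hd, hu⟩, fun X' Y' hcut' hss => ?_⟩
  obtain ⟨e, heXY, heX'Y'⟩ := Set.exists_of_ssubset hss
  obtain ⟨a, b, hadj, haX, hbY, rfl⟩ := crossSet_cases heXY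
  have hsub := hss.subset
  have haU : a ∈ X' ∪ Y' := hcut'.2.2.2 ▸ Set.mem_univ a
  have hbU : b ∈ X' ∪ Y' := hcut'.2.2.2 ▸ Set.mem_univ b
  rcases haU with haX' | haY' <;> rcases hbU with hbX' | hbY'
  · exact inner_no_ssubset hd hu hX hY hcut' hsub hadj haX hbY haX' hbX'
  · exact heX'Y' (adj_mem_crossSet hadj haX' hbY')
  · exact heX'Y' (by rw [Sym2.eq_swap]; exact adj_mem_crossSet hadj.symm hbX' haY')
  · have hsub' : crossSet G Y' X' ⊆ crossSet G X Y := by rwa [crossSet_comm]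
    exact inner_no_ssubset hd hu hX hY hcut'.symm hsub' hadj haX hbY haY' hbY'

/-- In a connected graph, each shore of a cocircuit induces a preconnected graph. -/
lemma shore_preconnected_of_cocircuit (hGc : G.Preconnected)
    (hco : IsCocircuitPair G X Y) : (G.induce X).Preconnected := by
  by_contra hnot
  rw [SimpleGraph.Preconnected] at hnot
  push_neg at hnot
  obtain ⟨a, z, hnr⟩ := hnot
  obtain ⟨⟨-, -, hd, hu⟩, hmin⟩ := hco
  set C : Set V := {v | ∃ h : v ∈ X, (G.induce X).Reachable a ⟨v, h⟩} with hC
  set D : Set V := {v | ∃ h : v ∈ X, (G.induce X).Reachable z ⟨v, h⟩} with hD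
  have haC : (a : V) ∈ C := ⟨a.2, by exact SimpleGraph.Reachable.refl _⟩
  have hzD : (z : V) ∈ D := ⟨z.2, by exact SimpleGraph.Reachable.refl _⟩
  have hCD : ∀ v, v ∈ C → v ∈ D → False := by
    rintro v ⟨hvX, hra⟩ ⟨hvX', hrz⟩
    exact hnr (hra.trans hrz.symm)
  -- C closed under adjacency within X
  have hCadj : ∀ p q, p ∈ C → q ∈ X → G.Adj p q → q ∈ C := by
    rintro p q ⟨hpX, hr⟩ hqX hpq
    exact ⟨hqX, hr.trans (SimpleGraph.Adj.reachable (by exact hpq))⟩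
  have hDadj : ∀ p q, p ∈ D → q ∈ X → G.Adj p q → q ∈ D := by
    rintro p q ⟨hpX, hr⟩ hqX hpq
    exact ⟨hqX, hr.trans (SimpleGraph.Adj.reachable (by exact hpq))⟩
  have hCX : C ⊆ X := fun v hv => hv.1
  have hDX : D ⊆ X := fun v hv => hv.1
  -- the cut (C, Cᶜ)
  have hcutC : IsCutPair C Cᶜ :=
    ⟨⟨a, haC⟩, ⟨z, fun h => hCD z h hzD⟩, Set.inter_compl_self C, Set.union_compl_self C⟩
  -- crossSet C Cᶜ ⊆ crossSet X Y
  have hsub : crossSet G C Cᶜ ⊆ crossSet G X Y := by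
    intro e he
    obtain ⟨p, q, hpq, hpC, hqC, rfl⟩ := crossSet_cases he
    have hqY : q ∈ Y := by
      by_cases hqX : q ∈ X
      · exact absurd (hCadj p q hpC hqX hpq) hqC
      · exact mem_Y_of_not_mem_X hu hqX
    exact adj_mem_crossSet hpq (hCX hpC) hqY
  -- find an edge leaving D, inside crossSet X Y but not crossSet C Cᶜ
  obtain ⟨w⟩ := hGc (z : V) (a : V)
  have haD : (a : V) ∉ D := fun h => hCD a haC h
  obtain ⟨p, q, hpq, hpD, hqD⟩ :=
    exists_cross_of_walk (Set.inter_compl_self D) (Set.union_compl_self D) w hzD haD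
  have hqY : q ∈ Y := by
    by_cases hqX : q ∈ X
    · exact absurd (hDadj p q hpD hqX hpq) hqD
    · exact mem_Y_of_not_mem_X hu hqX
  have hmemXY : s(p, q) ∈ crossSet G X Y := adj_mem_crossSet hpq (hDX hpD) hqY
  have hnotC : s(p, q) ∉ crossSet G C Cᶜ := by
    intro h
    rcases cross_pair_cases h with ⟨h1, -⟩ | ⟨h1, -⟩
    · exact hCD p h1 hpD
    · exact not_mem_inter_of_empty hd (hCX h1) hqY
  exact hmin C Cᶜ hcutC ⟨hsub, fun hback => hnotC (hback hmemXY)⟩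

end Shores
section Ext
variable {V : Type*} {G : SimpleGraph V} {n : ℕ}

lemma extX_ne_extX' : (extX : ExtV V n) ≠ extX' := by
  simp [extX, extX']

lemma extAux_ne_extX (j : Fin (n ^ 2)) : (extAux j : ExtV V n) ≠ extX := by
  simp [extAux, extX]

lemma extAux_ne_extX' (j : Fin (n ^ 2)) : (extAux j : ExtV V n) ≠ extX' := by
  simp [extAux, extX']

lemma inl_ne_extX (a : V) : (Sum.inl a : ExtV V n) ≠ extX := by simp [extX]

lemma inl_ne_extX' (a : V) : (Sum.inl a : ExtV V n) ≠ extX' := by simp [extX']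

lemma extGraph_adj {u v : ExtV V n} :
    (extGraph G n).Adj u v ↔
      (∃ a b, G.Adj a b ∧ u = Sum.inl a ∧ v = Sum.inl b) ∨
      ((u = extX ∨ u = extX') ∧ v ≠ extX ∧ v ≠ extX') ∨
      ((v = extX ∨ v = extX') ∧ u ≠ extX ∧ u ≠ extX') := by
  rw [extGraph, SimpleGraph.fromEdgeSet_adj]
  constructor
  · rintro ⟨hmem, hne⟩
    rcases hmem with ⟨e, he, heq⟩ | ⟨w, hwx, hwx', hor⟩
    · induction e with
      | h p q =>
        simp only [Sym2.map_pair_eq] at heq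
        rcases Sym2.eq_iff.1 heq.symm with ⟨rfl, rfl⟩ | ⟨rfl, rfl⟩
        · exact Or.inl ⟨p, q, he, rfl, rfl⟩
        · exact Or.inl ⟨q, p, ((SimpleGraph.mem_edgeSet G).1 he).symm, rfl, rfl⟩
    · rcases hor with heq | heq <;> rcases Sym2.eq_iff.1 heq with ⟨h1, h2⟩ | ⟨h1, h2⟩
      · exact Or.inr (Or.inl ⟨Or.inl h1, h2 ▸ hwx, h2 ▸ hwx'⟩)
      · exact Or.inr (Or.inr ⟨Or.inl h2, h1 ▸ hwx, h1 ▸ hwx'⟩)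
      · exact Or.inr (Or.inl ⟨Or.inr h1, h2 ▸ hwx, h2 ▸ hwx'⟩)
      · exact Or.inr (Or.inr ⟨Or.inr h2, h1 ▸ hwx, h1 ▸ hwx'⟩)
  · rintro (⟨a, b, hab, rfl, rfl⟩ | ⟨hu, hv1, hv2⟩ | ⟨hv, hu1, hu2⟩)
    · exact ⟨Or.inl ⟨s(a, b), (SimpleGraph.mem_edgeSet G).2 hab, by simp⟩,
        by simp [hab.ne]⟩
    · refine ⟨Or.inr ⟨v, hv1, hv2, ?_⟩, ?_⟩
      · rcases hu with rfl | rfl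
        · exact Or.inl rfl
        · exact Or.inr rfl
      · rcases hu with rfl | rfl
        · exact fun h => hv1 h.symm
        · exact fun h => hv2 h.symm
    · refine ⟨Or.inr ⟨u, hu1, hu2, ?_⟩, ?_⟩
      · rcases hv with rfl | rfl
        · exact Or.inl (Sym2.eq_swap)
        · exact Or.inr (Sym2.eq_swap)
      · rcases hv with rfl | rfl
        · exact fun h => hu1 h
        · exact fun h => hu2 h

lemma extGraph_adj_inl {a b : V} :
    (extGraph G n).Adj (Sum.inl a) (Sum.inl b) ↔ G.Adj a b := by
  rw [extGraph_adj]
  constructor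
  · rintro (⟨p, q, h, hp, hq⟩ | ⟨hu, -, -⟩ | ⟨hv, -, -⟩)
    · cases Sum.inl.inj hp; cases Sum.inl.inj hq; exact h
    · rcases hu with h | h <;> exact absurd h (by simp [extX, extX'])
    · rcases hv with h | h <;> exact absurd h (by simp [extX, extX'])
  · intro h
    exact Or.inl ⟨a, b, h, rfl, rfl⟩

lemma extGraph_adj_extX {w : ExtV V n} :
    (extGraph G n).Adj extX w ↔ w ≠ extX ∧ w ≠ extX' := by
  rw [extGraph_adj]
  constructor
  · rintro (⟨p, q, h, hp, hq⟩ | ⟨-, hv1, hv2⟩ | ⟨-, hu1, hu2⟩)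
    · exact absurd hp (by simp [extX])
    · exact ⟨hv1, hv2⟩
    · exact absurd rfl hu1
  · intro ⟨h1, h2⟩
    exact Or.inr (Or.inl ⟨Or.inl rfl, h1, h2⟩)

lemma extGraph_adj_extX' {w : ExtV V n} :
    (extGraph G n).Adj extX' w ↔ w ≠ extX ∧ w ≠ extX' := by
  rw [extGraph_adj]
  constructor
  · rintro (⟨p, q, h, hp, hq⟩ | ⟨-, hv1, hv2⟩ | ⟨-, hu1, hu2⟩)
    · exact absurd hp (by simp [extX'])
    · exact ⟨hv1, hv2⟩
    · exact absurd rfl hu2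
  · intro ⟨h1, h2⟩
    exact Or.inr (Or.inl ⟨Or.inr rfl, h1, h2⟩)

lemma extGraph_adj_extAux {j : Fin (n ^ 2)} {w : ExtV V n} :
    (extGraph G n).Adj (extAux j) w ↔ w = extX ∨ w = extX' := by
  rw [extGraph_adj]
  constructor
  · rintro (⟨p, q, h, hp, hq⟩ | ⟨hu, -, -⟩ | ⟨hv, -, -⟩)
    · exact absurd hp (by simp [extAux])
    · rcases hu with h | h
      · exact absurd h (extAux_ne_extX j)
      · exact absurd h (extAux_ne_extX' j)
    · exact hv
  · rintro (rfl | rfl)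
    · exact Or.inr (Or.inr ⟨Or.inl rfl, extAux_ne_extX j, extAux_ne_extX' j⟩)
    · exact Or.inr (Or.inr ⟨Or.inr rfl, extAux_ne_extX j, extAux_ne_extX' j⟩)

end Ext
section Ext2
variable {V : Type*} {G : SimpleGraph V} {n : ℕ}

lemma extGraph_not_adj_XX' : ¬ (extGraph G n).Adj extX extX' := by
  rw [extGraph_adj_extX]
  simp

/-- A vertex adjacent to everything else in `X` makes `induce X` preconnected. -/
lemma pre_of_hub {α : Type*} (H : SimpleGraph α) {X : Set α} {c : α} (hc : c ∈ X)
    (hdom : ∀ w ∈ X, w ≠ c → H.Adj c w) : (H.induce X).Preconnected := by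
  have key : ∀ u : X, (H.induce X).Reachable ⟨c, hc⟩ u := by
    intro u
    by_cases h : (u : α) = c
    · have : u = ⟨c, hc⟩ := Subtype.ext h
      rw [this]
    · exact SimpleGraph.Adj.reachable (by
        show H.Adj _ _
        exact hdom u u.2 h)
  intro u v
  exact (key u).symm.trans (key v)

lemma extGraph_preconnected (hn1 : 1 ≤ n) (hV : Nonempty V) :
    (extGraph G n).Preconnected := by
  classical
  obtain ⟨v₀⟩ := hV
  have hadjX : ∀ w : ExtV V n, w ≠ extX → w ≠ extX' → (extGraph G n).Adj extX w :=
    fun w h1 h2 => extGraph_adj_extX.2 ⟨h1, h2⟩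
  have hxv : (extGraph G n).Adj extX (Sum.inl v₀) := hadjX _ (inl_ne_extX v₀) (inl_ne_extX' v₀)
  have hx'v : (extGraph G n).Adj extX' (Sum.inl v₀) :=
    extGraph_adj_extX'.2 ⟨inl_ne_extX v₀, inl_ne_extX' v₀⟩
  have key : ∀ u : ExtV V n, (extGraph G n).Reachable extX u := by
    intro u
    by_cases h1 : u = extX
    · rw [h1]
    · by_cases h2 : u = extX'
      · rw [h2]; exact hxv.reachable.trans hx'v.reachable.symm
      · exact (hadjX u h1 h2).reachable
  intro u v
  exact (key u).symm.trans (key v)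

end Ext2
section Count
variable {V : Type*} [Fintype V] {G : SimpleGraph V} {n : ℕ}

example : Finite (Sym2 (ExtV V n)) := inferInstance

lemma crossSet_ext_ncard {X Y : Set (ExtV V n)} (hd : X ∩ Y = ∅) (huu : X ∪ Y = Set.univ)
    (hx : extX ∈ X) (hx' : extX' ∈ Y) (hcard : Fintype.card V = n) :
    (crossSet (extGraph G n) X Y).ncard
      = n ^ 2 + n + (crossSet G (Sum.inl ⁻¹' X) (Sum.inl ⁻¹' Y)).ncard := by
  classical
  set A : Set V := Sum.inl ⁻¹' X with hA
  set B : Set V := Sum.inl ⁻¹' Y with hB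
  set f : Fin (n ^ 2) → Sym2 (ExtV V n) :=
    fun j => if extAux j ∈ X then s(extAux j, extX') else s(extX, extAux j) with hf
  set g : V → Sym2 (ExtV V n) :=
    fun v => if Sum.inl v ∈ X then s(Sum.inl v, extX') else s(extX, Sum.inl v) with hg
  set T1 : Set (Sym2 (ExtV V n)) := Sym2.map Sum.inl '' crossSet G A B with hT1d
  set T2 : Set (Sym2 (ExtV V n)) := Set.range f with hT2d
  set T3 : Set (Sym2 (ExtV V n)) := Set.range g with hT3d
  have hxny : ∀ w, w ∈ X → w ∈ Y → False := fun w => not_mem_inter_of_empty hd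
  -- the decomposition
  have hsplit : crossSet (extGraph G n) X Y = T1 ∪ (T2 ∪ T3) := by
    ext e
    constructor
    · intro he
      obtain ⟨p, q, hadj, hpX, hqY, rfl⟩ := crossSet_cases he
      rcases extGraph_adj.1 hadj with ⟨a, b, hab, rfl, rfl⟩ | ⟨hu12, hv1, hv2⟩ | ⟨hv12, hu1, hu2⟩
      · exact Or.inl ⟨s(a, b), adj_mem_crossSet hab hpX hqY, by simp⟩
      · rcases hu12 with rfl | rfl
        · -- p = extX
          match q with
          | Sum.inl b =>
            refine Or.inr (Or.inr ⟨b, ?_⟩)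
            have : Sum.inl b ∉ X := fun h => hxny _ h hqY
            simp [hg, this]
          | Sum.inr (Sum.inl i) =>
            fin_cases i
            · exact absurd rfl hv1
            · exact absurd rfl hv2
          | Sum.inr (Sum.inr j) =>
            refine Or.inr (Or.inl ⟨j, ?_⟩)
            have hnx : extAux j ∉ X := fun h => hxny _ h hqY
            simp only [hf, if_neg hnx]
            rfl
        · exact (hxny _ hpX hx').elim
      · rcases hv12 with rfl | rfl
        · exact (hxny _ hx hqY).elim
        · -- q = extX'
          match p with
          | Sum.inl a =>
            refine Or.inr (Or.inr ⟨a, ?_⟩)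
            simp [hg, hpX]
          | Sum.inr (Sum.inl i) =>
            fin_cases i
            · exact absurd rfl hu1
            · exact absurd rfl hu2
          | Sum.inr (Sum.inr j) =>
            refine Or.inr (Or.inl ⟨j, ?_⟩)
            simp only [hf, if_pos (show extAux j ∈ X from hpX)]
            rfl
    · rintro (⟨e', he', rfl⟩ | ⟨j, rfl⟩ | ⟨v, rfl⟩)
      · obtain ⟨a, b, hab, haA, hbB, rfl⟩ := crossSet_cases he'
        simp only [Sym2.map_pair_eq]
        exact adj_mem_crossSet (extGraph_adj_inl.2 hab) haA hbB
      · by_cases h : extAux j ∈ X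
        · simp only [hf, if_pos h]
          exact adj_mem_crossSet (extGraph_adj_extAux.2 (Or.inr rfl)) h hx'
        · simp only [hf, if_neg h]
          exact adj_mem_crossSet
            (extGraph_adj_extX.2 ⟨extAux_ne_extX j, extAux_ne_extX' j⟩) hx
            (mem_Y_of_not_mem_X huu h)
      · by_cases h : Sum.inl v ∈ X
        · simp only [hg, if_pos h]
          exact adj_mem_crossSet
            ((extGraph_adj_extX'.2 ⟨inl_ne_extX v, inl_ne_extX' v⟩).symm) h hx'
        · simp only [hg, if_neg h]
          exact adj_mem_crossSet (extGraph_adj_extX.2 ⟨inl_ne_extX v, inl_ne_extX' v⟩) hx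
            (mem_Y_of_not_mem_X huu h)
  -- structural facts for disjointness
  have hT1 : ∀ e ∈ T1, ∀ z ∈ e, ∃ a : V, z = Sum.inl a := by
    rintro e ⟨e', -, rfl⟩ z hz
    obtain ⟨a, -, rfl⟩ := Sym2.mem_map.1 hz
    exact ⟨a, rfl⟩
  have hT2 : ∀ e ∈ T2, ∃ j, extAux j ∈ e := by
    rintro e ⟨j, rfl⟩
    by_cases h : extAux j ∈ X
    · exact ⟨j, by simp [hf, h]⟩
    · exact ⟨j, by simp [hf, h]⟩
  have hT3a : ∀ e ∈ T3, ∀ z ∈ e, (∃ v, z = Sum.inl v) ∨ z = extX ∨ z = extX' := by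
    rintro e ⟨v, rfl⟩ z hz
    by_cases h : Sum.inl v ∈ X
    · simp only [hg, if_pos h] at hz
      rcases Sym2.mem_iff.1 hz with rfl | rfl
      · exact Or.inl ⟨v, rfl⟩
      · exact Or.inr (Or.inr rfl)
    · simp only [hg, if_neg h] at hz
      rcases Sym2.mem_iff.1 hz with rfl | rfl
      · exact Or.inr (Or.inl rfl)
      · exact Or.inl ⟨v, rfl⟩
  have hT3b : ∀ e ∈ T3, extX ∈ e ∨ extX' ∈ e := by
    rintro e ⟨v, rfl⟩
    by_cases h : Sum.inl v ∈ X
    · simp [hg, h]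
    · simp [hg, h]
  have hd12 : Disjoint T1 T2 := by
    rw [Set.disjoint_left]
    intro e h1 h2
    obtain ⟨j, hj⟩ := hT2 e h2
    obtain ⟨a, ha⟩ := hT1 e h1 _ hj
    exact absurd ha (by simp [extAux])
  have hd13 : Disjoint T1 T3 := by
    rw [Set.disjoint_left]
    intro e h1 h3
    rcases hT3b e h3 with hm | hm <;> obtain ⟨a, ha⟩ := hT1 e h1 _ hm
    · exact absurd ha (by simp [extX])
    · exact absurd ha (by simp [extX'])
  have hd23 : Disjoint T2 T3 := by
    rw [Set.disjoint_left]
    intro e h2 h3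
    obtain ⟨j, hj⟩ := hT2 e h2
    rcases hT3a e h3 _ hj with ⟨v, hv⟩ | hv | hv
    · exact absurd hv (by simp [extAux])
    · exact absurd hv (extAux_ne_extX j)
    · exact absurd hv (extAux_ne_extX' j)
  -- injectivity of f and g
  have hfinj : Function.Injective f := by
    intro j j' h
    simp only [hf] at h
    split_ifs at h <;>
      simp [Sym2.eq_iff, extAux, extX, extX', Fin.ext_iff] at h <;> simpa [Fin.ext_iff] using h
  have hginj : Function.Injective g := by
    intro v v' h
    simp only [hg] at h
    split_ifs at h <;>
      simp [Sym2.eq_iff, extX, extX', Fin.ext_iff] at h <;> simpa using h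
  -- count
  have hc1 : T1.ncard = (crossSet G A B).ncard :=
    Set.ncard_image_of_injective _ (Sym2.map.injective Sum.inl_injective)
  have hc2 : T2.ncard = n ^ 2 := by
    rw [hT2d, ← Set.image_univ, Set.ncard_image_of_injective _ hfinj, Set.ncard_univ,
      Nat.card_eq_fintype_card, Fintype.card_fin]
  have hc3 : T3.ncard = n := by
    rw [hT3d, ← Set.image_univ, Set.ncard_image_of_injective _ hginj, Set.ncard_univ,
      Nat.card_eq_fintype_card, hcard]
  rw [hsplit, Set.ncard_union_eq (Set.disjoint_union_right.2 ⟨hd12, hd13⟩),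
    Set.ncard_union_eq hd23, hc1, hc2, hc3]
  omega

end Count
section SameSide
variable {V : Type*} [Fintype V] {G : SimpleGraph V} {n : ℕ}

lemma ncard_prod_le {α β : Type*} (s : Set α) (t : Set β) :
    ((s ×ˢ t)).ncard = s.ncard * t.ncard := by
  rw [← Nat.card_coe_set_eq, ← Nat.card_coe_set_eq, ← Nat.card_coe_set_eq, ← Nat.card_prod]
  exact Nat.card_congr (Equiv.Set.prod _ _)

lemma sameside_ncard_le {X Y : Set (ExtV V n)} (hcut : IsCutPair X Y)
    (hYpre : ((extGraph G n).induce Y).Preconnected)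
    (hx : extX ∈ X) (hx' : extX' ∈ X) (hcard : Fintype.card V = n) (hn1 : 1 ≤ n) :
    (crossSet (extGraph G n) X Y).ncard ≤ n ^ 2 + n := by
  classical
  obtain ⟨hXne, hYne, hd, hu⟩ := hcut
  have hxny : ∀ w, w ∈ X → w ∈ Y → False := fun w => not_mem_inter_of_empty hd
  by_cases haux : ∃ j, extAux j ∈ Y
  · obtain ⟨j, hj⟩ := haux
    have hYsub : ∀ y ∈ Y, y = extAux j := by
      intro y hy
      by_contra hne
      obtain ⟨w⟩ := hYpre ⟨extAux j, hj⟩ ⟨y, hy⟩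
      have := exists_cross_of_walk (G := (extGraph G n).induce Y)
        (X := {u : Y | (u : ExtV V n) = extAux j}) (Y := {u : Y | (u : ExtV V n) ≠ extAux j})
        (by ext u; simp) (by ext u; simp [em]) w rfl hne
      obtain ⟨p, q, hpq, hp, hq⟩ := this
      have hadj : (extGraph G n).Adj (extAux j) (q : ExtV V n) := by
        have : (extGraph G n).Adj (p : ExtV V n) (q : ExtV V n) := hpq
        rwa [show (p : ExtV V n) = extAux j from hp] at this
      rcases extGraph_adj_extAux.1 hadj with h | h
      · exact hxny _ (h ▸ hx) q.2
      · exact hxny _ (h ▸ hx') q.2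
    have hsub : crossSet (extGraph G n) X Y ⊆ {s(extX, extAux j), s(extX', extAux j)} := by
      intro e he
      obtain ⟨p, q, hadj, hpX, hqY, rfl⟩ := crossSet_cases he
      have hq : q = extAux j := hYsub q hqY
      subst hq
      rcases extGraph_adj_extAux.1 hadj.symm with rfl | rfl
      · exact Set.mem_insert _ _
      · exact Set.mem_insert_of_mem _ rfl
    calc (crossSet (extGraph G n) X Y).ncard
        ≤ ({s(extX, extAux j), s(extX', extAux j)} : Set (Sym2 (ExtV V n))).ncard :=
          Set.ncard_le_ncard hsub (Set.toFinite _)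
      _ ≤ 2 := by
          refine le_trans (Set.ncard_insert_le _ _) ?_
          simp
      _ ≤ n ^ 2 + n := by
          have : 1 ≤ n ^ 2 := Nat.one_le_pow _ _ hn1
          omega
  · push_neg at haux
    set B : Set V := Sum.inl ⁻¹' Y with hB
    have hsub : crossSet (extGraph G n) X Y ⊆
        (fun v => s(extX, Sum.inl v)) '' B ∪
          ((fun v => s(extX', Sum.inl v)) '' B ∪
            (fun p : V × V => s(Sum.inl p.1, Sum.inl p.2)) '' ((Bᶜ) ×ˢ B)) := by
      intro e he
      obtain ⟨p, q, hadj, hpX, hqY, rfl⟩ := crossSet_cases he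
      obtain ⟨v, rfl⟩ : ∃ v, q = Sum.inl v := by
        match q with
        | Sum.inl v => exact ⟨v, rfl⟩
        | Sum.inr (Sum.inl i) =>
          fin_cases i
          · exact (hxny _ hx hqY).elim
          · exact (hxny _ hx' hqY).elim
        | Sum.inr (Sum.inr j) => exact (haux j hqY).elim
      have hvB : v ∈ B := hqY
      rcases extGraph_adj.1 hadj with ⟨a, b, hab, rfl, heq⟩ | ⟨hu12, -, -⟩ | ⟨hv12, -, -⟩
      · cases Sum.inl.inj heq
        refine Or.inr (Or.inr ⟨(a, v), ⟨?_, hvB⟩, rfl⟩)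
        intro haB
        exact hxny _ hpX haB
      · rcases hu12 with rfl | rfl
        · exact Or.inl ⟨v, hvB, rfl⟩
        · exact Or.inr (Or.inl ⟨v, hvB, rfl⟩)
      · rcases hv12 with h | h
        · exact absurd h (inl_ne_extX v)
        · exact absurd h (inl_ne_extX' v)
    have hbc : B.ncard + Bᶜ.ncard = n := by
      rw [Set.ncard_add_ncard_compl, Nat.card_eq_fintype_card, hcard]
    set b := B.ncard
    set c := Bᶜ.ncard
    have hbb : b ≤ b * b := by
      rcases Nat.eq_zero_or_pos b with h | h
      · simp [h]
      · exact Nat.le_mul_of_pos_left _ h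
    calc (crossSet (extGraph G n) X Y).ncard
        ≤ _ := Set.ncard_le_ncard hsub (Set.toFinite _)
      _ ≤ b + (b + c * b) := by
          refine le_trans (Set.ncard_union_le _ _) (add_le_add (Set.ncard_image_le
            (Set.toFinite _)) ?_)
          refine le_trans (Set.ncard_union_le _ _) (add_le_add (Set.ncard_image_le
            (Set.toFinite _)) ?_)
          rw [← ncard_prod_le]
          exact Set.ncard_image_le (Set.toFinite _)
      _ ≤ n ^ 2 + n := by
          rw [← hbc]
          nlinarith [hbb, Nat.zero_le (b * c), Nat.zero_le (c * c)]

lemma no_sameside_cocircuit {X Y : Set (ExtV V n)} (hco : IsCocircuitPair (extGraph G n) X Y)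
    (hx : extX ∈ X) (hx' : extX' ∈ X) (hcard : Fintype.card V = n) (hn1 : 1 ≤ n) {k : ℕ}
    (hk : 1 ≤ k) (hsz : (crossSet (extGraph G n) X Y).ncard = n ^ 2 + n + k) : False := by
  have hV : Nonempty V := by
    rw [← Fintype.card_pos_iff, hcard]; omega
  have hYpre : ((extGraph G n).induce Y).Preconnected :=
    shore_preconnected_of_cocircuit (extGraph_preconnected hn1 hV) hco.symm
  have := sameside_ncard_le hco.1 hYpre hx hx' hcard hn1
  omega

end SameSide

section Counting

/-- The unordered pairs satisfying a symmetric "partition-like" predicate are counted by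
the ordered pairs with a fixed element in the first shore. -/
lemma sym2_card_eq_ord {α : Type*} (P : Set α → Set α → Prop)
    (hsymm : ∀ X Y, P X Y → P Y X) (hdisj : ∀ X Y, P X Y → X ∩ Y = ∅)
    (hcov : ∀ X Y, P X Y → X ∪ Y = Set.univ) (c : α) :
    Nat.card {p : Sym2 (Set α) // ∃ X Y, p = s(X, Y) ∧ P X Y} =
      Nat.card {q : Set α × Set α // P q.1 q.2 ∧ c ∈ q.1} := by
  symm
  apply Nat.card_eq_of_bijective
    (fun q => ⟨s(q.1.1, q.1.2), q.1.1, q.1.2, rfl, q.2.1⟩)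
  constructor
  · rintro ⟨⟨X, Y⟩, hP, hc⟩ ⟨⟨X', Y'⟩, hP', hc'⟩ h
    have h' : s(X, Y) = s(X', Y') := congrArg Subtype.val h
    rcases Sym2.eq_iff.1 h' with ⟨rfl, rfl⟩ | ⟨rfl, rfl⟩
    · rfl
    · exact absurd (Set.mem_inter hc' hc) (by simp [hdisj _ _ hP'])
  · rintro ⟨p, X, Y, rfl, hP⟩
    by_cases hc : c ∈ X
    · exact ⟨⟨(X, Y), hP, hc⟩, rfl⟩
    · refine ⟨⟨(Y, X), hsymm _ _ hP, mem_Y_of_not_mem_X (hcov _ _ hP) hc⟩, ?_⟩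
      exact Subtype.ext (Sym2.eq_swap)

lemma ord_card_eq_two_mul {α : Type*} (P : Set α → Set α → Prop)
    (hsymm : ∀ X Y, P X Y → P Y X) (hdisj : ∀ X Y, P X Y → X ∩ Y = ∅)
    (hcov : ∀ X Y, P X Y → X ∪ Y = Set.univ) (c : α) :
    Nat.card {q : Set α × Set α // P q.1 q.2} =
      2 * Nat.card {q : Set α × Set α // P q.1 q.2 ∧ c ∈ q.1} := by
  have : Nat.card (Bool × {q : Set α × Set α // P q.1 q.2 ∧ c ∈ q.1}) =
      2 * Nat.card {q : Set α × Set α // P q.1 q.2 ∧ c ∈ q.1} := by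
    rw [Nat.card_prod, Nat.card_eq_fintype_card, Fintype.card_bool]
  rw [← this]
  symm
  apply Nat.card_eq_of_bijective (fun bq =>
    if bq.1 then ⟨(bq.2.1.2, bq.2.1.1), hsymm _ _ bq.2.2.1⟩ else ⟨bq.2.1, bq.2.2.1⟩)
  constructor
  · rintro ⟨b, ⟨⟨X, Y⟩, hP, hc⟩⟩ ⟨b', ⟨⟨X', Y'⟩, hP', hc'⟩⟩ h
    have hcY : c ∉ Y := fun hy => absurd (Set.mem_inter hc hy) (by simp [hdisj _ _ hP])
    have hcY' : c ∉ Y' := fun hy => absurd (Set.mem_inter hc' hy) (by simp [hdisj _ _ hP'])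
    cases b <;> cases b' <;> simp only [if_true, if_false, Bool.false_eq_true] at h ⊢
    · have := congrArg Subtype.val h
      simp only [Prod.mk.injEq] at this
      simp [Prod.ext_iff, Subtype.ext_iff, this.1, this.2]
    · have := congrArg Subtype.val h
      simp only [Prod.mk.injEq] at this
      exact absurd (this.2.symm ▸ hc' : c ∈ Y) hcY
    · have := congrArg Subtype.val h
      simp only [Prod.mk.injEq] at this
      exact absurd (this.2 ▸ hc : c ∈ Y') hcY'
    · have := congrArg Subtype.val h
      simp only [Prod.mk.injEq] at this
      simp [Prod.ext_iff, Subtype.ext_iff, this.1, this.2]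
  · rintro ⟨⟨X, Y⟩, hP⟩
    by_cases hc : c ∈ X
    · exact ⟨⟨false, ⟨(X, Y), hP, hc⟩⟩, rfl⟩
    · exact ⟨⟨true, ⟨(Y, X), hsymm _ _ hP, mem_Y_of_not_mem_X (hcov _ _ hP) hc⟩⟩, rfl⟩

end Counting

section Main
variable {V : Type*} [Fintype V] {G : SimpleGraph V} {n : ℕ}

lemma partition_compl {α : Type*} {X Y : Set α} (hd : X ∩ Y = ∅) (hu : X ∪ Y = Set.univ) :
    Y = Xᶜ := by
  ext v
  constructor
  · exact fun hv hx => not_mem_inter_of_empty hd hx hv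
  · exact fun hv => mem_Y_of_not_mem_X hu hv

def shoreX {V : Type*} {n : ℕ} (A : Set V) (S : Set (Fin (n ^ 2))) : Set (ExtV V n) :=
  Sum.inl '' A ∪ ({extX} ∪ extAux '' S)

def shoreY {V : Type*} {n : ℕ} (B : Set V) (S : Set (Fin (n ^ 2))) : Set (ExtV V n) :=
  Sum.inl '' B ∪ ({extX'} ∪ extAux '' Sᶜ)

variable {A B : Set V} {S : Set (Fin (n ^ 2))}

lemma mem_shoreX_inl {v : V} : Sum.inl v ∈ shoreX A S ↔ v ∈ A := by
  simp [shoreX, extX, extAux]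

lemma mem_shoreX_aux {j : Fin (n ^ 2)} : extAux j ∈ shoreX A S ↔ j ∈ S := by
  simp [shoreX, extX, extAux]

lemma extX_mem_shoreX : extX ∈ shoreX A S := Or.inr (Or.inl rfl)

lemma extX'_not_mem_shoreX : extX' ∉ shoreX A S := by
  simp [shoreX, extX, extX', extAux, Fin.ext_iff]

lemma mem_shoreY_inl {v : V} : Sum.inl v ∈ shoreY B S ↔ v ∈ B := by
  simp [shoreY, extX', extAux]

lemma mem_shoreY_aux {j : Fin (n ^ 2)} : extAux j ∈ shoreY B S ↔ j ∉ S := by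
  simp [shoreY, extX', extAux]

lemma extX'_mem_shoreY : extX' ∈ shoreY B S := Or.inr (Or.inl rfl)

lemma extX_not_mem_shoreY : extX ∉ shoreY B S := by
  simp [shoreY, extX, extX', extAux, Fin.ext_iff]

lemma shoreY_eq_compl (hBA : B = Aᶜ) : shoreY B S = (shoreX A S)ᶜ := by
  ext w
  rcases w with v | (i | j)
  · rw [Set.mem_compl_iff, mem_shoreX_inl, mem_shoreY_inl, hBA]
    rfl
  · fin_cases i
    · constructor
      · exact fun h => absurd h extX_not_mem_shoreY
      · exact fun h => absurd extX_mem_shoreX h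
    · constructor
      · exact fun _ h => extX'_not_mem_shoreX h
      · exact fun _ => extX'_mem_shoreY
  · show extAux j ∈ shoreY B S ↔ extAux j ∉ shoreX A S
    rw [mem_shoreX_aux, mem_shoreY_aux]

lemma shore_cutpair (hd : A ∩ B = ∅) (hu : A ∪ B = Set.univ) :
    IsCutPair (shoreX A S) (shoreY B S) := by
  have hBA : B = Aᶜ := partition_compl hd hu
  rw [shoreY_eq_compl hBA]
  exact ⟨⟨extX, extX_mem_shoreX⟩, ⟨extX', extX'_not_mem_shoreX⟩,
    Set.inter_compl_self _, Set.union_compl_self _⟩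

lemma shoreX_pre : ((extGraph G n).induce (shoreX A S)).Preconnected := by
  refine pre_of_hub _ extX_mem_shoreX fun w hw hne => extGraph_adj_extX.2 ⟨hne, ?_⟩
  exact fun h => extX'_not_mem_shoreX (h ▸ hw)

lemma shoreY_pre : ((extGraph G n).induce (shoreY B S)).Preconnected := by
  refine pre_of_hub _ extX'_mem_shoreY fun w hw hne => extGraph_adj_extX'.2 ⟨?_, hne⟩
  exact fun h => extX_not_mem_shoreY (h ▸ hw)

lemma preimage_shoreX : Sum.inl ⁻¹' (shoreX A S) = A := by
  ext v; exact mem_shoreX_inl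

lemma preimage_shoreY : Sum.inl ⁻¹' (shoreY B S) = B := by
  ext v; exact mem_shoreY_inl

lemma main_card (hcard : Fintype.card V = n) (hn1 : 1 ≤ n) {k : ℕ} (hk : 1 ≤ k) :
    Nat.card {q : Set (ExtV V n) × Set (ExtV V n) //
        (IsCocircuitPair (extGraph G n) q.1 q.2 ∧
          (crossSet (extGraph G n) q.1 q.2).ncard = n ^ 2 + n + k) ∧ extX ∈ q.1} =
      2 ^ n ^ 2 *
        Nat.card {r : Set V × Set V // IsCutPair r.1 r.2 ∧ (crossSet G r.1 r.2).ncard = k} := by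
  classical
  have key := Nat.card_eq_of_bijective
    (f := fun (Sr : Set (Fin (n ^ 2)) ×
        {r : Set V × Set V // IsCutPair r.1 r.2 ∧ (crossSet G r.1 r.2).ncard = k}) =>
      (⟨(shoreX Sr.2.1.1 Sr.1, shoreY Sr.2.1.2 Sr.1), by
        obtain ⟨S, ⟨⟨A, B⟩, ⟨hAne, hBne, hd, hu⟩, hkk⟩⟩ := Sr
        have hcut : IsCutPair (shoreX A S) (shoreY B S) := shore_cutpair hd hu
        refine ⟨⟨cocircuit_of_connected_shores hcut shoreX_pre shoreY_pre, ?_⟩,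
          extX_mem_shoreX⟩
        rw [crossSet_ext_ncard hcut.2.2.1 hcut.2.2.2 extX_mem_shoreX extX'_mem_shoreY hcard,
          preimage_shoreX, preimage_shoreY, hkk]⟩ :
        {q : Set (ExtV V n) × Set (ExtV V n) //
          (IsCocircuitPair (extGraph G n) q.1 q.2 ∧
            (crossSet (extGraph G n) q.1 q.2).ncard = n ^ 2 + n + k) ∧ extX ∈ q.1}))
    (by
      constructor
      · rintro ⟨S, ⟨⟨A, B⟩, hr⟩⟩ ⟨S', ⟨⟨A', B'⟩, hr'⟩⟩ h
        have h' := congrArg Subtype.val h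
        simp only [Prod.mk.injEq] at h'
        obtain ⟨h1, h2⟩ := h'
        have hS : S = S' := by
          ext j
          rw [← mem_shoreX_aux (A := A), h1, mem_shoreX_aux]
        have hA : A = A' := by
          ext v
          rw [← mem_shoreX_inl (S := S), h1, mem_shoreX_inl]
        have hB : B = B' := by
          ext v
          rw [← mem_shoreY_inl (S := S), h2, mem_shoreY_inl]
        subst hS; subst hA; subst hB
        rfl
      · rintro ⟨⟨X, Y⟩, ⟨hco, hsz⟩, hx⟩
        obtain ⟨hXne, hYne, hd0, hu0⟩ := hco.1
        have hd : X ∩ Y = ∅ := hd0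
        have hu : X ∪ Y = Set.univ := hu0
        have hx0 : extX ∈ X := hx
        have hsz' : (crossSet (extGraph G n) X Y).ncard = n ^ 2 + n + k := hsz
        have hx' : extX' ∈ Y := by
          rcases (hu ▸ Set.mem_univ (extX' : ExtV V n) : extX' ∈ X ∪ Y) with h | h
          · exact absurd hsz' (fun hs => no_sameside_cocircuit hco hx0 h hcard hn1 hk hs)
          · exact h
        set A : Set V := Sum.inl ⁻¹' X with hA
        set B : Set V := Sum.inl ⁻¹' Y with hB
        set S : Set (Fin (n ^ 2)) := {j | extAux j ∈ X} with hS
        have hXeq : X = shoreX A S := by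
          ext w
          rcases w with v | (i | j)
          · rw [mem_shoreX_inl]; rfl
          · fin_cases i
            · exact ⟨fun _ => extX_mem_shoreX, fun _ => hx0⟩
            · exact ⟨fun h => absurd (Set.mem_inter h hx') (by simp [hd]),
                fun h => absurd h extX'_not_mem_shoreX⟩
          · show extAux j ∈ X ↔ extAux j ∈ shoreX A S
            rw [mem_shoreX_aux]
            rfl
        have hYeq : Y = shoreY B S := by
          ext w
          rcases w with v | (i | j)
          · rw [mem_shoreY_inl]; rfl
          · fin_cases i
            · exact ⟨fun h => absurd (Set.mem_inter hx0 h) (by simp [hd]),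
                fun h => absurd h extX_not_mem_shoreY⟩
            · exact ⟨fun _ => extX'_mem_shoreY, fun _ => hx'⟩
          · show extAux j ∈ Y ↔ extAux j ∈ shoreY B S
            rw [mem_shoreY_aux]
            constructor
            · exact fun h hj => not_mem_inter_of_empty hd hj h
            · exact fun h => mem_Y_of_not_mem_X hu h
        have hcr : (crossSet G A B).ncard = k := by
          have h2 := crossSet_ext_ncard (G := G) hd hu hx0 hx' hcard
          rw [hsz'] at h2
          have hAB : crossSet G A B = crossSet G (Sum.inl ⁻¹' X) (Sum.inl ⁻¹' Y) := rfl
          rw [hAB]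
          omega
        have hcutAB : IsCutPair A B := by
          have hne : (crossSet G A B).Nonempty := by
            rw [← Set.ncard_pos (Set.toFinite _), hcr]; omega
          obtain ⟨e, he⟩ := hne
          obtain ⟨a, b, -, ha, hb, -⟩ := crossSet_cases he
          refine ⟨⟨a, ha⟩, ⟨b, hb⟩, ?_, ?_⟩
          · exact Set.eq_empty_iff_forall_notMem.2
              fun v hv => not_mem_inter_of_empty hd hv.1 hv.2
          · ext v
            simp only [Set.mem_univ, iff_true]
            rcases (hu ▸ Set.mem_univ (Sum.inl v : ExtV V n) :
              (Sum.inl v : ExtV V n) ∈ X ∪ Y) with h | h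
            · exact Or.inl h
            · exact Or.inr h
        refine ⟨⟨S, ⟨(A, B), hcutAB, hcr⟩⟩, ?_⟩
        apply Subtype.ext
        show (shoreX A S, shoreY B S) = (X, Y)
        rw [← hXeq, ← hYeq])
  rw [← key, Nat.card_prod, Nat.card_eq_fintype_card, Fintype.card_set, Fintype.card_fin]

end Main

/-- The number of cocircuits of `G'` of size `n² + n + k` equals `2^(n²+1)` times the
number of cuts of `G` of size `k`. -/
theorem stmt_8 {V : Type*} [Fintype V] (G : SimpleGraph V) (hG : G.Connected)
    (n : ℕ) (hn : Fintype.card V = n) (hn1 : 1 ≤ n) (k : ℕ) (hk : 1 ≤ k) :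
    Nat.card {p : Sym2 (Set (ExtV V n)) // ∃ X Y : Set (ExtV V n),
        p = s(X, Y) ∧ IsCocircuitPair (extGraph G n) X Y ∧
          (crossSet (extGraph G n) X Y).ncard = n ^ 2 + n + k} =
      2 ^ (n ^ 2 + 1) *
        Nat.card {p : Sym2 (Set V) // ∃ X Y : Set V,
          p = s(X, Y) ∧ IsCutPair X Y ∧ (crossSet G X Y).ncard = k} := by
  classical
  have hV : Nonempty V := by rw [← Fintype.card_pos_iff, hn]; omega
  obtain ⟨v₀⟩ := hV
  have hsymm1 : ∀ X Y : Set (ExtV V n),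
      (IsCocircuitPair (extGraph G n) X Y ∧
        (crossSet (extGraph G n) X Y).ncard = n ^ 2 + n + k) →
      (IsCocircuitPair (extGraph G n) Y X ∧
        (crossSet (extGraph G n) Y X).ncard = n ^ 2 + n + k) :=
    fun X Y h => ⟨h.1.symm, by rw [crossSet_comm]; exact h.2⟩
  have hsymm2 : ∀ X Y : Set V,
      (IsCutPair X Y ∧ (crossSet G X Y).ncard = k) →
      (IsCutPair Y X ∧ (crossSet G Y X).ncard = k) :=
    fun X Y h => ⟨h.1.symm, by rw [crossSet_comm]; exact h.2⟩
  have e1 :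
      Nat.card {p : Sym2 (Set (ExtV V n)) // ∃ X Y : Set (ExtV V n),
          p = s(X, Y) ∧ IsCocircuitPair (extGraph G n) X Y ∧
            (crossSet (extGraph G n) X Y).ncard = n ^ 2 + n + k} =
        Nat.card {q : Set (ExtV V n) × Set (ExtV V n) //
          (IsCocircuitPair (extGraph G n) q.1 q.2 ∧
            (crossSet (extGraph G n) q.1 q.2).ncard = n ^ 2 + n + k) ∧ extX ∈ q.1} :=
    sym2_card_eq_ord
      (fun X Y => IsCocircuitPair (extGraph G n) X Y ∧
        (crossSet (extGraph G n) X Y).ncard = n ^ 2 + n + k)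
      hsymm1 (fun X Y h => h.1.1.2.2.1) (fun X Y h => h.1.1.2.2.2) extX
  have e2 := main_card (G := G) hn hn1 hk
  have e3 :
      Nat.card {r : Set V × Set V // IsCutPair r.1 r.2 ∧ (crossSet G r.1 r.2).ncard = k} =
        2 * Nat.card {r : Set V × Set V //
          (IsCutPair r.1 r.2 ∧ (crossSet G r.1 r.2).ncard = k) ∧ v₀ ∈ r.1} :=
    ord_card_eq_two_mul (fun X Y => IsCutPair X Y ∧ (crossSet G X Y).ncard = k)
      hsymm2 (fun X Y h => h.1.2.2.1) (fun X Y h => h.1.2.2.2) v₀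
  have e4 :
      Nat.card {p : Sym2 (Set V) // ∃ X Y : Set V,
          p = s(X, Y) ∧ IsCutPair X Y ∧ (crossSet G X Y).ncard = k} =
        Nat.card {r : Set V × Set V //
          (IsCutPair r.1 r.2 ∧ (crossSet G r.1 r.2).ncard = k) ∧ v₀ ∈ r.1} :=
    sym2_card_eq_ord (fun X Y => IsCutPair X Y ∧ (crossSet G X Y).ncard = k)
      hsymm2 (fun X Y h => h.1.2.2.1) (fun X Y h => h.1.2.2.2) v₀
  rw [e1, e2, e3, e4]
  ring
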